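/- Let L be a positive integer and let D = ⋃_{a ∈ {0,1}ⁿ} T_a ⊆ ℝ^{2n−1}. Then (2n)^{2n−1} times the (2n−1)-dimensional Lebesgue volume of D ∩ {x ∈ ℝ^{2n−1} : L − 1/2 < x₁ < L + 1/2} equals the number of bit vectors a ∈ {0,1}ⁿ with ∑_{i=1}^{n} a_i s_i = L (equivalently, the number of subsets of the indices {1,…,n} whose corresponding integers s_i sum to L). -/

import Mathlib

open MeasureTheory
open scoped ENNReal

noncomputable section

/-- The value `a_{m−n+1} s_{m−n+1}` carried by a leaf of the heap-indexed binary tree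
(0-based: index `j` is a leaf when `n − 1 ≤ j`, carrying `s_{j−(n−1)}`); the value is `0`
on internal nodes. -/
def leafWeight (n : ℕ) (s : Fin n → ℕ) (a : Fin n → Bool) (j : Fin (2 * n - 1)) : ℝ :=
  if _ : n - 1 ≤ (j : ℕ) then
    (if a ⟨(j : ℕ) - (n - 1), by have := j.isLt; omega⟩ then
      (s ⟨(j : ℕ) - (n - 1), by have := j.isLt; omega⟩ : ℝ) else 0)
  else 0

/-- The tree region `T_a ⊆ ℝ^{2n−1}` : coordinates are indexed in heap order (0-based:
node `j` is internal when `j < n − 1`, with children `2j+1` and `2j+2`; the nodes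
`n − 1 ≤ j` are leaves). A point `x` lies in `T_a` iff for every leaf `j`,
`a_j s_j − 1/(4n) < x_j < a_j s_j + 1/(4n)`, and for every internal node `j`,
`x_{2j+1} + x_{2j+2} − 1/(4n) < x_j < x_{2j+1} + x_{2j+2} + 1/(4n)`. -/
def treeRegion (n : ℕ) (s : Fin n → ℕ) (a : Fin n → Bool) : Set (Fin (2 * n - 1) → ℝ) :=
  {x | (∀ j : Fin (2 * n - 1), n - 1 ≤ (j : ℕ) →
          (leafWeight n s a j - 1 / (4 * (n : ℝ)) < x j ∧
           x j < leafWeight n s a j + 1 / (4 * (n : ℝ)))) ∧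
       (∀ j : Fin (2 * n - 1), ∀ h : (j : ℕ) < n - 1,
          (x ⟨2 * (j : ℕ) + 1, by omega⟩ + x ⟨2 * (j : ℕ) + 2, by omega⟩ - 1 / (4 * (n : ℝ))
              < x j ∧
           x j < x ⟨2 * (j : ℕ) + 1, by omega⟩ + x ⟨2 * (j : ℕ) + 2, by omega⟩
              + 1 / (4 * (n : ℝ))))}

namespace TreeProof

variable {n : ℕ}

/-- The set of nodes in the subtree rooted at node `j` (0-based heap indexing). -/
def subtree (n : ℕ) (j : ℕ) : Finset (Fin (2 * n - 1)) :=
  Finset.univ.filter (fun m => ∃ t < 2 * n, ((m : ℕ) + 1) / 2 ^ t = j + 1)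

lemma mem_subtree {j : ℕ} {m : Fin (2 * n - 1)} :
    m ∈ subtree n j ↔ ∃ t < 2 * n, ((m : ℕ) + 1) / 2 ^ t = j + 1 := by
  simp [subtree]

lemma pow_le_of_div (m : Fin (2 * n - 1)) {t j : ℕ} (h : ((m : ℕ) + 1) / 2 ^ t = j + 1) :
    2 ^ t ≤ (m : ℕ) + 1 := by
  by_contra hc
  push_neg at hc
  rw [Nat.div_eq_of_lt (by omega)] at h
  omega

lemma t_small (m : Fin (2 * n - 1)) {t j : ℕ} (h : ((m : ℕ) + 1) / 2 ^ t = j + 1) :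
    t + 1 < 2 * n := by
  have h1 := pow_le_of_div m h
  have h2 := m.isLt
  have h3 : t < 2 ^ t := Nat.lt_two_pow_self
  omega

lemma div_chain (x : ℕ) {t u : ℕ} (h : t ≤ u) : x / 2 ^ u = (x / 2 ^ t) / 2 ^ (u - t) := by
  rw [Nat.div_div_eq_div_mul, ← pow_add]
  congr 2
  omega

lemma subtree_le {j : ℕ} {m : Fin (2 * n - 1)} (hm : m ∈ subtree n j) : j ≤ (m : ℕ) := by
  obtain ⟨t, _, h⟩ := mem_subtree.mp hm
  have := Nat.div_le_self ((m : ℕ) + 1) (2 ^ t)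
  omega

lemma subtree_leaf {j : ℕ} (hj : n - 1 ≤ j) (hj2 : j < 2 * n - 1) :
    subtree n j = {⟨j, hj2⟩} := by
  ext m
  simp only [mem_subtree, Finset.mem_singleton, Fin.ext_iff]
  constructor
  · rintro ⟨t, ht, hdiv⟩
    rcases t with - | t'
    · simpa using hdiv
    · exfalso
      have h2 : ((m : ℕ) + 1) / 2 ^ (t' + 1) = (((m : ℕ) + 1) / 2 ^ t') / 2 := by
        rw [pow_succ, Nat.div_div_eq_div_mul]
      have h3 := Nat.div_le_self ((m : ℕ) + 1) (2 ^ t')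
      have h4 := m.isLt
      omega
  · intro h
    exact ⟨0, by omega, by simpa using h⟩

lemma subtree_internal_mem {j : ℕ} (hj : j < n - 1) (m : Fin (2 * n - 1)) :
    m ∈ subtree n j ↔
      (m : ℕ) = j ∨ m ∈ subtree n (2 * j + 1) ∨ m ∈ subtree n (2 * j + 2) := by
  simp only [mem_subtree]
  constructor
  · rintro ⟨t, ht, hdiv⟩
    rcases t with - | t'
    · left; simpa using hdiv
    · have h2 : ((m : ℕ) + 1) / 2 ^ (t' + 1) = (((m : ℕ) + 1) / 2 ^ t') / 2 := by
        rw [pow_succ, Nat.div_div_eq_div_mul]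
      set q := ((m : ℕ) + 1) / 2 ^ t' with hq
      have hq2 : q / 2 = j + 1 := by omega
      have : q = 2 * j + 2 ∨ q = 2 * j + 3 := by omega
      rcases this with h | h
      · right; left; exact ⟨t', by omega, by omega⟩
      · right; right; exact ⟨t', by omega, by omega⟩
  · rintro (h | ⟨t, ht, hdiv⟩ | ⟨t, ht, hdiv⟩)
    · exact ⟨0, by have := m.isLt; omega, by simpa using h⟩
    · refine ⟨t + 1, t_small m hdiv, ?_⟩
      rw [pow_succ, ← Nat.div_div_eq_div_mul, hdiv]
      omega
    · refine ⟨t + 1, t_small m hdiv, ?_⟩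
      rw [pow_succ, ← Nat.div_div_eq_div_mul, hdiv]
      omega

lemma subtree_children_disjoint {j : ℕ} :
    Disjoint (subtree n (2 * j + 1)) (subtree n (2 * j + 2)) := by
  rw [Finset.disjoint_left]
  intro m hm1 hm2
  obtain ⟨t, _, ht⟩ := mem_subtree.mp hm1
  obtain ⟨u, _, hu⟩ := mem_subtree.mp hm2
  rcases lt_trichotomy t u with h | h | h
  · rw [div_chain ((m : ℕ) + 1) h.le, ht] at hu
    have h2 : (2 * j + 1 + 1) / 2 ^ (u - t) ≤ (2 * j + 1 + 1) / 2 ^ 1 :=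
      Nat.div_le_div_left (Nat.pow_le_pow_right (by norm_num) (by omega)) (by positivity)
    simp only [pow_one] at h2
    omega
  · subst h; omega
  · rw [div_chain ((m : ℕ) + 1) h.le, hu] at ht
    have h2 : (2 * j + 2 + 1) / 2 ^ (t - u) ≤ (2 * j + 2 + 1) / 2 ^ 1 :=
      Nat.div_le_div_left (Nat.pow_le_pow_right (by norm_num) (by omega)) (by positivity)
    simp only [pow_one] at h2
    omega

lemma subtree_internal {j : ℕ} (hj : j < n - 1) (hlt : j < 2 * n - 1) :
    subtree n j = insert ⟨j, hlt⟩ (subtree n (2 * j + 1) ∪ subtree n (2 * j + 2)) := by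
  ext m
  simp only [subtree_internal_mem hj m, Finset.mem_insert, Finset.mem_union, Fin.ext_iff]

lemma self_not_mem_children {j : ℕ} (hlt : j < 2 * n - 1) :
    (⟨j, hlt⟩ : Fin (2 * n - 1)) ∉ subtree n (2 * j + 1) ∪ subtree n (2 * j + 2) := by
  intro h
  rcases Finset.mem_union.mp h with h | h
  · have := subtree_le h; simp at this; omega
  · have := subtree_le h; simp at this; omega

lemma subtree_root (hn : 1 ≤ n) : subtree n 0 = Finset.univ := by
  ext m
  simp only [mem_subtree, Finset.mem_univ, iff_true]
  set t := Nat.log 2 ((m : ℕ) + 1) with hT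
  have h1 : 2 ^ t ≤ (m : ℕ) + 1 := Nat.pow_log_le_self 2 (by omega)
  have h2 : (m : ℕ) + 1 < 2 ^ (t + 1) := Nat.lt_pow_succ_log_self (by norm_num) _
  have h3 : ((m : ℕ) + 1) / 2 ^ t = 0 + 1 := by
    rw [pow_succ] at h2
    have hle : 1 ≤ ((m : ℕ) + 1) / 2 ^ t := (Nat.one_le_div_iff (by positivity)).mpr h1
    have hlt : ((m : ℕ) + 1) / 2 ^ t < 2 := Nat.div_lt_of_lt_mul (by omega)
    omega
  have h4 := t_small m h3
  exact ⟨t, by omega, h3⟩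


lemma subtree_card_internal {j : ℕ} (hj : j < n - 1) (hlt : j < 2 * n - 1) :
    (subtree n j).card
      = 1 + (subtree n (2 * j + 1)).card + (subtree n (2 * j + 2)).card := by
  rw [subtree_internal hj hlt, Finset.card_insert_of_notMem (self_not_mem_children hlt),
    Finset.card_union_of_disjoint subtree_children_disjoint]
  ring

lemma subtree_sum_internal {j : ℕ} (hj : j < n - 1) (hlt : j < 2 * n - 1)
    (f : Fin (2 * n - 1) → ℝ) :
    ∑ m ∈ subtree n j, f m
      = f ⟨j, hlt⟩ + ∑ m ∈ subtree n (2 * j + 1), f m + ∑ m ∈ subtree n (2 * j + 2), f m := by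
  rw [subtree_internal hj hlt, Finset.sum_insert (self_not_mem_children hlt),
    Finset.sum_union subtree_children_disjoint]
  ring

lemma leafWeight_internal {s : Fin n → ℕ} {a : Fin n → Bool} {j : Fin (2 * n - 1)}
    (hj : (j : ℕ) < n - 1) : leafWeight n s a j = 0 := by
  rw [leafWeight, dif_neg (by omega)]

lemma err_bound (hn : 1 ≤ n) (s : Fin n → ℕ) (a : Fin n → Bool)
    (x : Fin (2 * n - 1) → ℝ) (hx : x ∈ treeRegion n s a) :
    ∀ d : ℕ, ∀ j : Fin (2 * n - 1), 2 * n - 1 - (j : ℕ) ≤ d →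
      |x j - ∑ m ∈ subtree n (j : ℕ), leafWeight n s a m|
        < ((subtree n (j : ℕ)).card : ℝ) / (4 * n) := by
  intro d
  induction d with
  | zero => intro j hj; exact absurd hj (by have := j.isLt; omega)
  | succ d ih =>
    intro j hj
    have hnR : (0 : ℝ) < 4 * (n : ℝ) := by positivity
    by_cases hleaf : n - 1 ≤ (j : ℕ)
    · rw [subtree_leaf hleaf j.isLt]
      have hjj : (⟨(j : ℕ), j.isLt⟩ : Fin (2 * n - 1)) = j := rfl
      rw [hjj, Finset.sum_singleton, Finset.card_singleton]
      have h := hx.1 j hleaf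
      rw [abs_lt]
      constructor <;> [nlinarith [h.1]; nlinarith [h.2]]
    · push_neg at hleaf
      have hlt1 : 2 * (j : ℕ) + 1 < 2 * n - 1 := by have := j.isLt; omega
      have hlt2 : 2 * (j : ℕ) + 2 < 2 * n - 1 := by have := j.isLt; omega
      have ih1 := ih ⟨2 * (j : ℕ) + 1, hlt1⟩ (by simp only []; have := j.isLt; omega)
      have ih2 := ih ⟨2 * (j : ℕ) + 2, hlt2⟩ (by simp only []; have := j.isLt; omega)
      have hmid := hx.2 j hleaf
      have hjj : (⟨(j : ℕ), j.isLt⟩ : Fin (2 * n - 1)) = j := rfl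
      rw [subtree_sum_internal hleaf j.isLt, subtree_card_internal hleaf j.isLt, hjj,
        leafWeight_internal hleaf]
      rw [abs_lt] at ih1 ih2 ⊢
      simp only [] at ih1 ih2
      push_cast
      have hm1 : x ⟨2 * (j : ℕ) + 1, hlt1⟩ + x ⟨2 * (j : ℕ) + 2, hlt2⟩ - 1 / (4 * (n : ℝ))
          < x j := hmid.1
      have hm2 : x j < x ⟨2 * (j : ℕ) + 1, hlt1⟩ + x ⟨2 * (j : ℕ) + 2, hlt2⟩
          + 1 / (4 * (n : ℝ)) := hmid.2
      simp only [add_div]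
      constructor
      · linarith [ih1.1, ih2.1, hm1]
      · linarith [ih1.2, ih2.2, hm2]


lemma leafWeight_at_leaf (hn : 1 ≤ n) (s : Fin n → ℕ) (a : Fin n → Bool) (i : Fin n) :
    leafWeight n s a ⟨n - 1 + (i : ℕ), by have := i.isLt; omega⟩
      = (if a i then (s i : ℝ) else 0) := by
  have hcond : n - 1 ≤ ((⟨n - 1 + (i : ℕ), by have := i.isLt; omega⟩ : Fin (2 * n - 1)) : ℕ) := by
    simp
  rw [leafWeight, dif_pos hcond]
  have hidx : (⟨((⟨n - 1 + (i : ℕ), by have := i.isLt; omega⟩ : Fin (2 * n - 1)) : ℕ) - (n - 1),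
      by have := i.isLt; omega⟩ : Fin n) = i := by
    apply Fin.ext
    simp

  rw [hidx]

lemma sum_leafWeight (hn : 1 ≤ n) (s : Fin n → ℕ) (a : Fin n → Bool) :
    ∑ m : Fin (2 * n - 1), leafWeight n s a m
      = ((∑ i : Fin n, if a i then s i else 0 : ℕ) : ℝ) := by
  classical
  set emb : Fin n → Fin (2 * n - 1) :=
    (fun i => ⟨n - 1 + (i : ℕ), by have := i.isLt; omega⟩) with hemb
  have hinj : ∀ i ∈ Finset.univ, ∀ i' ∈ Finset.univ, emb i = emb i' → i = i' := by
    intro i _ i' _ h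
    apply Fin.ext
    have := congrArg (fun (m : Fin (2 * n - 1)) => (m : ℕ)) h
    simp only [hemb] at this
    omega
  have h0 : ∀ m : Fin (2 * n - 1), m ∉ Finset.univ.image emb → leafWeight n s a m = 0 := by
    intro m hm
    by_cases hml : n - 1 ≤ (m : ℕ)
    · exfalso
      apply hm
      rw [Finset.mem_image]
      refine ⟨⟨(m : ℕ) - (n - 1), by have := m.isLt; omega⟩, Finset.mem_univ _, ?_⟩
      apply Fin.ext
      simp only [hemb]
      have := m.isLt
      omega
    · rw [leafWeight, dif_neg hml]
  calc ∑ m : Fin (2 * n - 1), leafWeight n s a m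
      = ∑ m ∈ Finset.univ.image emb, leafWeight n s a m :=
        (Finset.sum_subset (Finset.subset_univ _) (fun m _ hm => h0 m hm)).symm
    _ = ∑ i : Fin n, leafWeight n s a (emb i) := Finset.sum_image hinj
    _ = ∑ i : Fin n, (if a i then (s i : ℝ) else 0) := by
        refine Finset.sum_congr rfl fun i _ => ?_
        exact leafWeight_at_leaf hn s a i
    _ = ((∑ i : Fin n, if a i then s i else 0 : ℕ) : ℝ) := by
        push_cast
        refine Finset.sum_congr rfl fun i _ => ?_
        split <;> simp

lemma root_close (hn : 1 ≤ n) (s : Fin n → ℕ) (a : Fin n → Bool)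
    (x : Fin (2 * n - 1) → ℝ) (hx : x ∈ treeRegion n s a) :
    |x ⟨0, by omega⟩ - ((∑ i : Fin n, if a i then s i else 0 : ℕ) : ℝ)| < 1 / 2 := by
  have h := err_bound hn s a x hx (2 * n - 1) ⟨0, by omega⟩ (by simp)
  have hzero : ((⟨0, by omega⟩ : Fin (2 * n - 1)) : ℕ) = 0 := rfl
  rw [hzero, subtree_root hn, Finset.card_univ, Fintype.card_fin, sum_leafWeight hn s a] at h
  have hb : ((2 * n - 1 : ℕ) : ℝ) / (4 * (n : ℝ)) < 1 / 2 := by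
    rw [div_lt_iff₀ (by positivity)]
    have h1 : ((2 * n - 1 : ℕ) : ℝ) = 2 * (n : ℝ) - 1 := by
      push_cast [Nat.cast_sub (by omega : 1 ≤ 2 * n)]
      ring
    rw [h1]
    have : (1 : ℝ) ≤ (n : ℝ) := by exact_mod_cast hn
    nlinarith
  linarith

lemma treeRegion_disjoint (hn : 1 ≤ n) (s : Fin n → ℕ) (hs : ∀ i, 0 < s i)
    {a b : Fin n → Bool} (hab : a ≠ b) :
    Disjoint (treeRegion n s a) (treeRegion n s b) := by
  rw [Set.disjoint_left]
  intro x hxa hxb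
  obtain i : {i // a i ≠ b i} := Classical.indefiniteDescription _ (Function.ne_iff.mp hab)
  obtain ⟨i, hi⟩ := i
  set j : Fin (2 * n - 1) := ⟨n - 1 + (i : ℕ), by have := i.isLt; omega⟩ with hjdef
  have hjl : n - 1 ≤ (j : ℕ) := by simp [hjdef]
  have ha := hxa.1 j hjl
  have hb := hxb.1 j hjl
  rw [leafWeight_at_leaf hn s a i] at ha
  rw [leafWeight_at_leaf hn s b i] at hb
  have hsi : (1 : ℝ) ≤ (s i : ℝ) := by exact_mod_cast hs i
  have hnn : (1 : ℝ) ≤ (n : ℝ) := by exact_mod_cast hn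
  have heps : ((n : ℝ))⁻¹ ≤ 1 := by
    first
    | exact inv_le_one (by exact_mod_cast hn)
    | exact inv_le_one_of_one_le₀ (by exact_mod_cast hn)
    | exact inv_le_one₀.mpr (by exact_mod_cast hn)
  cases hA : a i <;> cases hB : b i <;> rw [hA] at hi <;> rw [hB] at hi
  · simp at hi
  · rw [hA] at ha; rw [hB] at hb
    norm_num at ha hb
    linarith [ha.1, ha.2, hb.1, hb.2]
  · rw [hA] at ha; rw [hB] at hb
    norm_num at ha hb
    linarith [ha.1, ha.2, hb.1, hb.2]
  · simp at hi


/-- The unipotent linear map `x_j ↦ x_j − (x_{2j+1} + x_{2j+2})` (for internal `j`). -/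
def treeLin (n : ℕ) : (Fin (2 * n - 1) → ℝ) →ₗ[ℝ] (Fin (2 * n - 1) → ℝ) where
  toFun x := fun j => x j -
    (if h : (j : ℕ) < n - 1 then
      x ⟨2 * (j : ℕ) + 1, by have := j.isLt; omega⟩
        + x ⟨2 * (j : ℕ) + 2, by have := j.isLt; omega⟩ else 0)
  map_add' x y := by
    funext j
    by_cases h : (j : ℕ) < n - 1 <;> simp [h] <;> ring
  map_smul' c x := by
    funext j
    by_cases h : (j : ℕ) < n - 1 <;> simp [h] <;> ring

lemma det_treeLin (n : ℕ) : LinearMap.det (treeLin n) = 1 := by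
  rw [← LinearMap.det_toMatrix']
  have hb : (LinearMap.toMatrix' (treeLin n)).BlockTriangular id := by
    intro i j hij
    simp only [id] at hij
    rw [LinearMap.toMatrix'_apply]
    simp only [treeLin, LinearMap.coe_mk, AddHom.coe_mk, Pi.single_apply]
    have hij' : (j : ℕ) < (i : ℕ) := hij
    by_cases h : (i : ℕ) < n - 1
    · rw [dif_pos h]
      rw [if_neg (by intro hc; rw [hc] at hij'; omega),
        if_neg (by intro hc; apply_fun (fun (m : Fin (2 * n - 1)) => (m : ℕ)) at hc; simp at hc; omega),
        if_neg (by intro hc; apply_fun (fun (m : Fin (2 * n - 1)) => (m : ℕ)) at hc; simp at hc; omega)]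
      ring
    · rw [dif_neg h, if_neg (by intro hc; rw [hc] at hij'; omega)]
      ring
  rw [Matrix.det_of_upperTriangular hb]
  apply Finset.prod_eq_one
  intro i _
  rw [LinearMap.toMatrix'_apply]
  simp only [treeLin, LinearMap.coe_mk, AddHom.coe_mk, Pi.single_apply]
  rw [if_pos trivial]
  by_cases h : (i : ℕ) < n - 1
  · rw [dif_pos h]
    rw [if_neg (by intro hc; apply_fun (fun (m : Fin (2 * n - 1)) => (m : ℕ)) at hc; simp at hc; omega),
      if_neg (by intro hc; apply_fun (fun (m : Fin (2 * n - 1)) => (m : ℕ)) at hc; simp at hc; omega)]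
    ring
  · rw [dif_neg h]; ring

/-- `T_a` as the preimage of a cube under an affine map. -/
lemma treeRegion_eq (n : ℕ) (s : Fin n → ℕ) (a : Fin n → Bool) :
    treeRegion n s a = (fun x => treeLin n x - leafWeight n s a) ⁻¹'
      (Set.univ.pi fun _ : Fin (2 * n - 1) =>
        Set.Ioo (-(1 / (4 * (n : ℝ)))) (1 / (4 * (n : ℝ)))) := by
  ext x
  simp only [treeRegion, Set.mem_preimage, Set.mem_pi, Set.mem_univ, Set.mem_Ioo,
    forall_const, Set.mem_setOf_eq, Pi.sub_apply]
  constructor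
  · rintro ⟨hleaf, hint⟩ j
    by_cases h : (j : ℕ) < n - 1
    · have := hint j h
      simp only [treeLin, LinearMap.coe_mk, AddHom.coe_mk, dif_pos h,
        leafWeight_internal h]
      constructor <;> linarith [this.1, this.2]
    · have := hleaf j (by omega)
      simp only [treeLin, LinearMap.coe_mk, AddHom.coe_mk, dif_neg h]
      constructor <;> linarith [this.1, this.2]
  · intro h
    constructor
    · intro j hj
      have := h j
      simp only [treeLin, LinearMap.coe_mk, AddHom.coe_mk, dif_neg (by omega : ¬ (j : ℕ) < n - 1)]
        at this
      constructor <;> linarith [this.1, this.2]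
    · intro j hj
      have := h j
      simp only [treeLin, LinearMap.coe_mk, AddHom.coe_mk, dif_pos hj, leafWeight_internal hj]
        at this
      constructor <;> linarith [this.1, this.2]

lemma measurable_treeRegion (n : ℕ) (s : Fin n → ℕ) (a : Fin n → Bool) :
    MeasurableSet (treeRegion n s a) := by
  rw [treeRegion_eq]
  apply MeasurableSet.preimage
  · exact MeasurableSet.univ_pi fun _ => measurableSet_Ioo
  · apply Measurable.sub
    · exact (LinearMap.continuous_of_finiteDimensional (treeLin n)).measurable
    · exact measurable_const

lemma volume_treeRegion (hn : 1 ≤ n) (s : Fin n → ℕ) (a : Fin n → Bool) :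
    volume (treeRegion n s a) = ((2 * (n : ℝ≥0∞))⁻¹) ^ (2 * n - 1) := by
  rw [treeRegion_eq]
  have hcomp : (fun x => treeLin n x - leafWeight n s a)
      = (fun y => y + (-(leafWeight n s a))) ∘ (treeLin n) := by
    funext y; simp [sub_eq_add_neg]
  rw [hcomp, Set.preimage_comp]
  rw [MeasureTheory.Measure.addHaar_preimage_linearMap volume
    (by rw [det_treeLin]; norm_num)]
  rw [det_treeLin]
  rw [measure_preimage_add_right]
  rw [volume_pi_pi]
  have hone : |(1 : ℝ)⁻¹| = 1 := by norm_num
  rw [hone, ENNReal.ofReal_one, one_mul]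
  have hIoo : volume (Set.Ioo (-(1 / (4 * (n : ℝ)))) (1 / (4 * (n : ℝ))))
      = (2 * (n : ℝ≥0∞))⁻¹ := by
    rw [Real.volume_Ioo]
    have h1 : 1 / (4 * (n : ℝ)) - -(1 / (4 * (n : ℝ))) = (2 * (n : ℝ))⁻¹ := by
      have hnR : (0 : ℝ) < (n : ℝ) := by exact_mod_cast hn
      field_simp
      ring
    rw [h1, ENNReal.ofReal_inv_of_pos (by positivity)]
    congr 1
    rw [ENNReal.ofReal_mul (by norm_num)]
    simp [ENNReal.ofReal_natCast]
  rw [Finset.prod_const, hIoo, Finset.card_univ, Fintype.card_fin]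


lemma main_aux (hn1 : 1 ≤ n) (s : Fin n → ℕ) (hs : ∀ i, 0 < s i) (L : ℕ)
    (root : Fin (2 * n - 1)) (hroot : root = ⟨0, by omega⟩) :
    (2 * (n : ℝ≥0∞)) ^ (2 * n - 1) *
      volume ((⋃ a : Fin n → Bool, treeRegion n s a) ∩
        {x : Fin (2 * n - 1) → ℝ | (L : ℝ) - 1 / 2 < x root ∧ x root < (L : ℝ) + 1 / 2})
    = ((Finset.univ.filter
        (fun a : Fin n → Bool => (∑ i : Fin n, if a i then s i else 0) = L)).card : ℝ≥0∞) := by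
  classical
  subst hroot
  set r0 : Fin (2 * n - 1) := ⟨0, by omega⟩ with hr0
  set strip := {x : Fin (2 * n - 1) → ℝ | (L : ℝ) - 1 / 2 < x r0 ∧ x r0 < (L : ℝ) + 1 / 2}
    with hstrip
  have hstripm : MeasurableSet strip := by
    have he : strip = (fun x : Fin (2 * n - 1) → ℝ => x r0) ⁻¹'
        (Set.Ioo ((L : ℝ) - 1 / 2) ((L : ℝ) + 1 / 2)) := rfl
    rw [he]
    exact measurableSet_Ioo.preimage (measurable_pi_apply r0)
  rw [Set.iUnion_inter]
  rw [measure_iUnion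
    (fun a b hab => ((treeRegion_disjoint hn1 s hs hab).mono
      Set.inter_subset_left Set.inter_subset_left))
    (fun a => (measurable_treeRegion n s a).inter hstripm)]
  rw [tsum_fintype]
  have key : ∀ a : Fin n → Bool,
      volume (treeRegion n s a ∩ strip)
        = if (∑ i : Fin n, if a i then s i else 0) = L
            then ((2 * (n : ℝ≥0∞))⁻¹) ^ (2 * n - 1) else 0 := by
    intro a
    by_cases hSa : (∑ i : Fin n, if a i then s i else 0) = L
    · rw [if_pos hSa]
      have hsub : treeRegion n s a ⊆ strip := by
        intro x hx
        have h := root_close hn1 s a x hx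
        rw [hSa, abs_lt] at h
        exact ⟨by linarith [h.1], by linarith [h.2]⟩
      rw [Set.inter_eq_self_of_subset_left hsub]
      exact volume_treeRegion hn1 s a
    · rw [if_neg hSa]
      have hempty : treeRegion n s a ∩ strip = ∅ := by
        ext x
        simp only [Set.mem_inter_iff, Set.mem_empty_iff_false, iff_false, not_and]
        intro hx hstripx
        have h := root_close hn1 s a x hx
        rw [abs_lt] at h
        obtain ⟨hsx1, hsx2⟩ := hstripx
        rcases Nat.lt_or_ge (∑ i : Fin n, if a i then s i else 0) L with hlt | hge
        · have hc : ((∑ i : Fin n, if a i then s i else 0 : ℕ) : ℝ) + 1 ≤ (L : ℝ) := by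
            exact_mod_cast hlt
          linarith [h.2]
        · have hgt : L < (∑ i : Fin n, if a i then s i else 0) := by omega
          have hc : (L : ℝ) + 1 ≤ ((∑ i : Fin n, if a i then s i else 0 : ℕ) : ℝ) := by
            exact_mod_cast hgt
          linarith [h.1]
      rw [hempty, measure_empty]
  rw [Finset.sum_congr rfl (fun a _ => key a)]
  rw [← Finset.sum_filter, Finset.sum_const, nsmul_eq_mul]
  rw [mul_comm ((Finset.univ.filter
      (fun a : Fin n → Bool => (∑ i : Fin n, if a i then s i else 0) = L)).card : ℝ≥0∞) _,
    ← mul_assoc, ← mul_pow,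
    ENNReal.mul_inv_cancel
      (by
        apply mul_ne_zero
        · norm_num
        · exact_mod_cast (by omega : n ≠ 0))
      (ENNReal.mul_ne_top (by norm_num) (ENNReal.natCast_ne_top n)),
    one_pow, one_mul]

end TreeProof

/-- Theorem 2 reduction correctness: let `L` be a positive integer and
`D = ⋃_{a ∈ {0,1}ⁿ} T_a ⊆ ℝ^{2n−1}`. Then
`(2n)^{2n−1} · volume (D ∩ {x : L − 1/2 < x₁ < L + 1/2})` equals the number of bit vectors
`a ∈ {0,1}ⁿ` with `∑ a_i s_i = L`. -/
theorem treeRegion_counts_subset_sums (k : ℕ) (hk : 1 ≤ k) (n : ℕ) (hn : n = 2 ^ k)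
    (s : Fin n → ℕ) (hs : ∀ i, 0 < s i) (L : ℕ) (hL : 0 < L) :
    let root : Fin (2 * n - 1) := ⟨0, by have := Nat.one_le_two_pow (n := k); omega⟩
    (2 * (n : ℝ≥0∞)) ^ (2 * n - 1) *
      volume ((⋃ a : Fin n → Bool, treeRegion n s a) ∩
        {x : Fin (2 * n - 1) → ℝ | (L : ℝ) - 1 / 2 < x root ∧ x root < (L : ℝ) + 1 / 2})
    = ((Finset.univ.filter
        (fun a : Fin n → Bool => (∑ i : Fin n, if a i then s i else 0) = L)).card : ℝ≥0∞) := by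
  intro root
  have hn1 : 1 ≤ n := by
    rw [hn]
    exact Nat.one_le_two_pow
  exact TreeProof.main_aux hn1 s hs L root rfl
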